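/- Let v ∈ C²(T) and V = v - v_{xx}. If V(x) > 0 for all x ∈ T, then -v(x) ≤ v_x(x) ≤ v(x) for all x ∈ T (in particular v > 0 and |v_x| ≤ v); if V(x) < 0 for all x, then v(x) ≤ v_x(x) ≤ -v(x) for all x. In either case ‖v_x‖_{L^∞} ≤ ‖v‖_{L^∞}. -/

import Mathlib

open Real

lemma pos_of_deriv_add_pos (u : ℝ → ℝ) (hu : Differentiable ℝ u)
    (hper : Function.Periodic u (2 * π)) (h : ∀ x, 0 < deriv u x + u x) :
    ∀ x, 0 < u x := by
  intro x
  set g : ℝ → ℝ := fun x => Real.exp x * u x with hg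
  have hd : ∀ y, HasDerivAt g (Real.exp y * u y + Real.exp y * deriv u y) y := by
    intro y
    exact (Real.hasDerivAt_exp y).mul (hu y).hasDerivAt
  have hmono : StrictMono g := by
    apply strictMono_of_deriv_pos
    intro y
    rw [(hd y).deriv]
    have := h y
    nlinarith [Real.exp_pos y]
  have hlt : g x < g (x + 2 * π) := hmono (by have := Real.pi_pos; linarith)
  have h2 : g (x + 2 * π) = Real.exp x * Real.exp (2 * π) * u x := by
    rw [hg]; simp only [hper x, Real.exp_add]
  have hexp : 1 < Real.exp (2 * π) := by
    rw [show (1:ℝ) = Real.exp 0 by simp]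
    exact Real.exp_lt_exp.mpr (by positivity)
  have hgx : g x = Real.exp x * u x := rfl
  rw [h2, hgx] at hlt
  have h3 : u x < Real.exp (2 * π) * u x := by nlinarith [Real.exp_pos x]
  nlinarith

lemma pos_of_deriv_sub_neg (u : ℝ → ℝ) (hu : Differentiable ℝ u)
    (hper : Function.Periodic u (2 * π)) (h : ∀ x, deriv u x - u x < 0) :
    ∀ x, 0 < u x := by
  intro x
  set g : ℝ → ℝ := fun x => Real.exp (-x) * u x with hg
  have hde : ∀ y : ℝ, HasDerivAt (fun z : ℝ => Real.exp (-z)) (-Real.exp (-y)) y := by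
    intro y
    refine ((Real.hasDerivAt_exp (-y)).comp y (hasDerivAt_neg y)).congr_deriv ?_; simp
  have hd : ∀ y, HasDerivAt g (-Real.exp (-y) * u y + Real.exp (-y) * deriv u y) y := by
    intro y
    exact (hde y).mul (hu y).hasDerivAt
  have hanti : StrictAnti g := by
    apply strictAnti_of_deriv_neg
    intro y
    rw [(hd y).deriv]
    have := h y
    nlinarith [Real.exp_pos (-y)]
  have hlt : g (x + 2 * π) < g x := hanti (by have := Real.pi_pos; linarith)
  have h2 : g (x + 2 * π) = Real.exp (-x) * Real.exp (-(2 * π)) * u x := by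
    rw [hg]; simp only [hper x, neg_add, Real.exp_add]
  have hexp : Real.exp (-(2 * π)) < 1 := by
    rw [show (1:ℝ) = Real.exp 0 by simp]
    apply Real.exp_lt_exp.mpr
    have := Real.pi_pos; linarith
  have hgx : g x = Real.exp (-x) * u x := rfl
  rw [h2, hgx] at hlt
  have h3 : Real.exp (-(2 * π)) * u x < u x := by nlinarith [Real.exp_pos (-x)]
  nlinarith

theorem deriv_bounded_by_v (v : ℝ → ℝ) (hv : ContDiff ℝ 2 v)
    (hper : Function.Periodic v (2 * π)) :
    ((∀ x : ℝ, 0 < v x - deriv (deriv v) x) →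
      ∀ x : ℝ, -v x ≤ deriv v x ∧ deriv v x ≤ v x) ∧
    ((∀ x : ℝ, v x - deriv (deriv v) x < 0) →
      ∀ x : ℝ, v x ≤ deriv v x ∧ deriv v x ≤ -v x) ∧
    (((∀ x : ℝ, 0 < v x - deriv (deriv v) x) ∨
        (∀ x : ℝ, v x - deriv (deriv v) x < 0)) →
      (⨆ x : ℝ, |deriv v x|) ≤ ⨆ x : ℝ, |v x|) := by
  have hdv : Differentiable ℝ v := hv.differentiable (by norm_num)
  have hdv1 : ContDiff ℝ 1 (deriv v) := by
    have h2 : ContDiff ℝ ((1 : ℕ) + 1) v := by exact_mod_cast hv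
    exact (contDiff_succ_iff_deriv.mp h2).2.2
  have hdv' : Differentiable ℝ (deriv v) := hdv1.differentiable one_ne_zero
  have hperd : Function.Periodic (deriv v) (2 * π) := by
    intro x
    have : (fun y => v (y + 2 * π)) = v := funext fun y => hper y
    rw [← deriv_comp_add_const v (2 * π) x, this]
  -- part 1
  have part1 : (∀ x : ℝ, 0 < v x - deriv (deriv v) x) →
      ∀ x : ℝ, -v x ≤ deriv v x ∧ deriv v x ≤ v x := by
    intro hV x
    have hA : ∀ y, 0 < v y - deriv v y := by
      apply pos_of_deriv_add_pos _ (hdv.sub hdv') (hper.sub hperd)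
      intro y
      rw [deriv_sub (hdv y) (hdv' y)]
      have := hV y; simp only [Pi.sub_apply, Pi.add_apply, Pi.neg_apply]; linarith
    have hB : ∀ y, 0 < v y + deriv v y := by
      apply pos_of_deriv_sub_neg _ (hdv.add hdv') (hper.add hperd)
      intro y
      rw [deriv_add (hdv y) (hdv' y)]
      have := hV y; simp only [Pi.sub_apply, Pi.add_apply, Pi.neg_apply]; linarith
    exact ⟨by have := hB x; linarith, by have := hA x; linarith⟩
  have part2 : (∀ x : ℝ, v x - deriv (deriv v) x < 0) →
      ∀ x : ℝ, v x ≤ deriv v x ∧ deriv v x ≤ -v x := by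
    intro hV x
    have hA : ∀ y, 0 < deriv v y - v y := by
      apply pos_of_deriv_add_pos _ (hdv'.sub hdv) (hperd.sub hper)
      intro y
      rw [deriv_sub (hdv' y) (hdv y)]
      have := hV y; simp only [Pi.sub_apply, Pi.add_apply, Pi.neg_apply]; linarith
    have hB : ∀ y, 0 < -v y - deriv v y := by
      apply pos_of_deriv_sub_neg _ ((hdv.neg).sub hdv') (fun y => by simp [hper y, hperd y])
      intro y
      rw [deriv_sub (hdv.neg y) (hdv' y), deriv.neg]
      have := hV y; simp only [Pi.sub_apply, Pi.add_apply, Pi.neg_apply]; linarith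
    exact ⟨by have := hA x; linarith, by have := hB x; linarith⟩
  refine ⟨part1, part2, ?_⟩
  intro hcase
  have hptwise : ∀ x, |deriv v x| ≤ |v x| := by
    intro x
    rcases hcase with hV | hV
    · obtain ⟨h1, h2⟩ := part1 hV x
      have : |deriv v x| ≤ v x := abs_le.mpr ⟨h1, h2⟩
      exact this.trans (le_abs_self _)
    · obtain ⟨h1, h2⟩ := part2 hV x
      have : |deriv v x| ≤ -v x := abs_le.mpr ⟨by linarith, h2⟩
      exact this.trans (neg_le_abs _)
  have hb : BddAbove (Set.range fun x => |v x|) := by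
    have hp : Function.Periodic (fun x => |v x|) (2 * π) := fun x => by simp [hper x]
    have hc : Continuous fun x => |v x| := (hv.continuous).abs
    have := hp.isBounded_of_continuous (by positivity) hc
    exact (isBounded_iff_bddBelow_bddAbove.mp this).2
  exact ciSup_mono hb hptwise
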